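/- Consider i.i.d. data (X_i, A_i, Ỹ_i, Ŷ_i), i = 1,…,n, a fixed action a, a bound B ≥ 1 with |Ỹ| ≤ B almost surely, and a measurable function f_0 with ||f_0||_∞ ≤ B. For f in the RKHS H_γ of the anisotropic Gaussian kernel, let f̂_n = argmin_{f ∈ H_γ} P_n I(A = a){Ŷ − f(X)}^2 + λ ||f||_{H_γ}^2 and d_n = argmin_{f ∈ H_γ} P_n I(A = a){Ỹ − f(X)}^2 + λ ||f||_{H_γ}^2. Define h_f = I(A = a)[{Ỹ − f(X)}^2 − {Ỹ − f_0(X)}^2] and E(f) = λ ||f||_{H_γ}^2 + E h_{T_B(f)}, where T_B is truncation to [−B, B]. Then for any f ∈ H_γ, E(f̂_n) ≤ λ ||f||_{H_γ}^2 + P_n h_f − P_n h_{f̂_n} + E h_{T_B(f̂_n)} + 2 P_n (Ŷ − Ỹ)^2, where in E h_{T_B(f̂_n)} the expectation is evaluated for fixed f and then f = f̂_n is substituted. -/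

import Mathlib

open MeasureTheory

/-- The anisotropic Gaussian kernel on `ℝ^q`:
`K_γ(x, z) = exp(− Σ_j γ_j (x_j − z_j)²)`. -/
noncomputable def gaussKernel (q : ℕ) (γ : Fin q → ℝ) (x z : Fin q → ℝ) : ℝ :=
  Real.exp (-∑ j, γ j * (x j - z j) ^ 2)

/-- The feature map `φ_γ^x(u) = (4/π)^{q/4} (∏_j γ_j)^{1/4} exp(−Σ_j 2γ_j (x_j − u_j)²)`
of the anisotropic Gaussian kernel. -/
noncomputable def gaussFeature (q : ℕ) (γ : Fin q → ℝ) (x : Fin q → ℝ) :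
    (Fin q → ℝ) → ℝ :=
  fun u => (4 / Real.pi) ^ ((q : ℝ) / 4) * (∏ j, γ j) ^ ((1 : ℝ) / 4) *
    Real.exp (-∑ j, 2 * γ j * (x j - u j) ^ 2)

/-- Membership in the reproducing kernel Hilbert space `H_γ(D)` of the anisotropic Gaussian
kernel, via the `L²` feature-map characterization (Steinwart–Christmann, Theorem 4.21):
`f ∈ H_γ(D)` iff there is `g ∈ L²(ℝ^q)` with `f(x) = ⟨φ_γ^x, g⟩_{L²}` for all `x ∈ D`. -/
def memGaussRKHS (q : ℕ) (γ : Fin q → ℝ) (D : Set (Fin q → ℝ))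
    (f : (Fin q → ℝ) → ℝ) : Prop :=
  ∃ g : (Fin q → ℝ) → ℝ, MemLp g 2 (volume : Measure (Fin q → ℝ)) ∧
    ∀ x ∈ D, f x = ∫ u, gaussFeature q γ x u * g u

/-- The RKHS norm of `f` in `H_γ(D)`: the infimum of `‖g‖_{L²(ℝ^q)}` over all feature-map
representations `f = ⟨φ_γ^·, g⟩_{L²}` of `f` on `D`. -/
noncomputable def gaussRKHSNorm (q : ℕ) (γ : Fin q → ℝ) (D : Set (Fin q → ℝ))
    (f : (Fin q → ℝ) → ℝ) : ℝ :=
  sInf {r | ∃ g : (Fin q → ℝ) → ℝ, MemLp g 2 (volume : Measure (Fin q → ℝ)) ∧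
    (∀ x ∈ D, f x = ∫ u, gaussFeature q γ x u * g u) ∧
    r = Real.sqrt (∫ u, (g u) ^ 2)}

/-- Truncation of a real number to `[−B, B]`. -/
noncomputable def trunc (B y : ℝ) : ℝ := max (min y B) (-B)


/- Auxiliary lemmas -/

lemma gaussFeature_memLp (q : ℕ) (γ : Fin q → ℝ) (hγ : ∀ j, 0 < γ j) (x : Fin q → ℝ) :
    MemLp (gaussFeature q γ x) 2 (volume : Measure (Fin q → ℝ)) := by
  have hc : Continuous (gaussFeature q γ x) := by
    unfold gaussFeature; continuity
  rw [memLp_two_iff_integrable_sq hc.aestronglyMeasurable]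
  have h1 : Integrable (fun u : Fin q → ℝ => ∏ j, Real.exp (-(4 * γ j) * (u j - x j) ^ 2)) := by
    apply Integrable.fintype_prod (f := fun j t => Real.exp (-(4 * γ j) * (t - x j) ^ 2))
    intro j
    exact (integrable_exp_neg_mul_sq (by linarith [hγ j])).comp_sub_right (x j)
  have hx : ∀ u : Fin q → ℝ, ∏ j, Real.exp (-(4 * γ j) * (u j - x j) ^ 2)
      = (Real.exp (-∑ j, 2 * γ j * (x j - u j) ^ 2)) ^ 2 := by
    intro u
    rw [← Real.exp_sum, sq, ← Real.exp_add, ← neg_add, ← Finset.sum_add_distrib,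
      ← Finset.sum_neg_distrib]
    exact congrArg Real.exp (Finset.sum_congr rfl fun j _ => by ring)
  apply (h1.const_mul (((4 / Real.pi) ^ ((q : ℝ) / 4) * (∏ j, γ j) ^ ((1 : ℝ) / 4)) ^ 2)).congr
  apply Filter.Eventually.of_forall
  intro u
  show _ = gaussFeature q γ x u ^ 2
  simp only [gaussFeature]
  rw [hx u, ← mul_pow]

lemma feat_mul_integrable (q : ℕ) (γ : Fin q → ℝ) (hγ : ∀ j, 0 < γ j) (x : Fin q → ℝ)
    {g : (Fin q → ℝ) → ℝ} (hg : MemLp g 2 (volume : Measure (Fin q → ℝ))) :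
    Integrable (fun u => gaussFeature q γ x u * g u) (volume : Measure (Fin q → ℝ)) := by
  have h := hg.smul (q := 2) (p := 2) (r := 1) (gaussFeature_memLp q γ hγ x) (hpqr := ENNReal.HolderTriple.mk <| by simp only [one_div, inv_one]; rw [ENNReal.inv_two_add_inv_two])
  rw [memLp_one_iff_integrable] at h
  exact h.congr (Filter.Eventually.of_forall fun u => by simp [smul_eq_mul])

lemma gaussRKHSNorm_nonneg (q : ℕ) (γ : Fin q → ℝ) (f : (Fin q → ℝ) → ℝ) :
    0 ≤ gaussRKHSNorm q γ Set.univ f := by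
  apply Real.sInf_nonneg
  rintro r ⟨g, -, -, rfl⟩
  exact Real.sqrt_nonneg _

lemma gaussRKHS_bddBelow (q : ℕ) (γ : Fin q → ℝ) (f : (Fin q → ℝ) → ℝ) :
    BddBelow {r | ∃ g : (Fin q → ℝ) → ℝ, MemLp g 2 (volume : Measure (Fin q → ℝ)) ∧
      (∀ x ∈ Set.univ, f x = ∫ u, gaussFeature q γ x u * g u) ∧
      r = Real.sqrt (∫ u, (g u) ^ 2)} := by
  refine ⟨0, ?_⟩
  rintro r ⟨g, -, -, rfl⟩
  exact Real.sqrt_nonneg _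

lemma mid_rep (q : ℕ) (γ : Fin q → ℝ) (hγ : ∀ j, 0 < γ j)
    {u v h₁ h₂ : (Fin q → ℝ) → ℝ}
    (hh₁ : MemLp h₁ 2 (volume : Measure (Fin q → ℝ)))
    (hh₂ : MemLp h₂ 2 (volume : Measure (Fin q → ℝ)))
    (hr₁ : ∀ x ∈ Set.univ, u x = ∫ w, gaussFeature q γ x w * h₁ w)
    (hr₂ : ∀ x ∈ Set.univ, v x = ∫ w, gaussFeature q γ x w * h₂ w) :
    MemLp (fun w => (h₁ w + h₂ w) / 2) 2 (volume : Measure (Fin q → ℝ)) ∧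
    ∀ x ∈ Set.univ, (fun y => (u y + v y) / 2) x
      = ∫ w, gaussFeature q γ x w * ((fun w => (h₁ w + h₂ w) / 2) w) := by
  constructor
  · exact ((hh₁.add hh₂).const_mul (2⁻¹)).ae_eq
      (Filter.Eventually.of_forall fun w => by simp; ring)
  · intro x _
    have hkey : ∫ w, gaussFeature q γ x w * ((h₁ w + h₂ w) / 2)
        = ((∫ w, gaussFeature q γ x w * h₁ w) + ∫ w, gaussFeature q γ x w * h₂ w) / 2 := by
      rw [← integral_add (feat_mul_integrable q γ hγ x hh₁) (feat_mul_integrable q γ hγ x hh₂),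
        ← integral_div]
      exact integral_congr_ae (Filter.Eventually.of_forall fun w => by ring)
    simp only [hkey]
    rw [hr₁ x (Set.mem_univ x), hr₂ x (Set.mem_univ x)]

lemma mid_norm_sq (q : ℕ) (γ : Fin q → ℝ) (hγ : ∀ j, 0 < γ j)
    {u v : (Fin q → ℝ) → ℝ}
    (hu : memGaussRKHS q γ Set.univ u) (hv : memGaussRKHS q γ Set.univ v) :
    gaussRKHSNorm q γ Set.univ (fun y => (u y + v y) / 2) ^ 2
      ≤ (gaussRKHSNorm q γ Set.univ u ^ 2 + gaussRKHSNorm q γ Set.univ v ^ 2) / 2 := by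
  set Nu := gaussRKHSNorm q γ Set.univ u with hNu
  set Nv := gaussRKHSNorm q γ Set.univ v with hNv
  set Nm := gaussRKHSNorm q γ Set.univ (fun y => (u y + v y) / 2) with hNm
  have hNu0 : 0 ≤ Nu := gaussRKHSNorm_nonneg q γ u
  have hNv0 : 0 ≤ Nv := gaussRKHSNorm_nonneg q γ v
  have hNm0 : 0 ≤ Nm := gaussRKHSNorm_nonneg q γ _
  have key : ∀ ε : ℝ, 0 < ε → Nm ^ 2 ≤ ((Nu + ε) ^ 2 + (Nv + ε) ^ 2) / 2 := by
    intro ε hε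
    obtain ⟨gu, hgu, hrepu⟩ := hu
    obtain ⟨gv, hgv, hrepv⟩ := hv
    obtain ⟨r₁, hr₁S, hr₁lt⟩ := Real.lt_sInf_add_pos (s :=
      {r | ∃ g : (Fin q → ℝ) → ℝ, MemLp g 2 (volume : Measure (Fin q → ℝ)) ∧
        (∀ x ∈ Set.univ, u x = ∫ w, gaussFeature q γ x w * g w) ∧
        r = Real.sqrt (∫ w, (g w) ^ 2)}) ⟨_, gu, hgu, hrepu, rfl⟩ hε
    obtain ⟨h₁, hh₁, hrep₁, rfl⟩ := hr₁S
    obtain ⟨r₂, hr₂S, hr₂lt⟩ := Real.lt_sInf_add_pos (s :=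
      {r | ∃ g : (Fin q → ℝ) → ℝ, MemLp g 2 (volume : Measure (Fin q → ℝ)) ∧
        (∀ x ∈ Set.univ, v x = ∫ w, gaussFeature q γ x w * g w) ∧
        r = Real.sqrt (∫ w, (g w) ^ 2)}) ⟨_, gv, hgv, hrepv, rfl⟩ hε
    obtain ⟨h₂, hh₂, hrep₂, rfl⟩ := hr₂S
    obtain ⟨hmem_m, hrep_m⟩ := mid_rep q γ hγ hh₁ hh₂ hrep₁ hrep₂
    have hNm_le : Nm ≤ Real.sqrt (∫ w, ((fun w => (h₁ w + h₂ w) / 2) w) ^ 2) :=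
      csInf_le (gaussRKHS_bddBelow q γ _) ⟨_, hmem_m, hrep_m, rfl⟩
    have ihm : Integrable (fun w => ((h₁ w + h₂ w) / 2) ^ 2)
        (volume : Measure (Fin q → ℝ)) := hmem_m.integrable_sq
    have ih₁ : Integrable (fun w => (h₁ w) ^ 2) (volume : Measure (Fin q → ℝ)) :=
      hh₁.integrable_sq
    have ih₂ : Integrable (fun w => (h₂ w) ^ 2) (volume : Measure (Fin q → ℝ)) :=
      hh₂.integrable_sq
    have hint : (∫ w, ((h₁ w + h₂ w) / 2) ^ 2)
        ≤ ((∫ w, (h₁ w) ^ 2) + ∫ w, (h₂ w) ^ 2) / 2 := by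
      calc (∫ w, ((h₁ w + h₂ w) / 2) ^ 2)
          ≤ ∫ w, ((h₁ w) ^ 2 + (h₂ w) ^ 2) / 2 := by
            apply integral_mono ihm ((ih₁.add ih₂).div_const 2)
            intro w
            simp only [Pi.add_apply]
            nlinarith [sq_nonneg (h₁ w - h₂ w)]
        _ = ((∫ w, (h₁ w) ^ 2) + ∫ w, (h₂ w) ^ 2) / 2 := by
            rw [integral_div, integral_add ih₁ ih₂]
    have hintm0 : 0 ≤ ∫ w, ((h₁ w + h₂ w) / 2) ^ 2 :=
      integral_nonneg fun w => sq_nonneg _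
    have hint₁0 : 0 ≤ ∫ w, (h₁ w) ^ 2 := integral_nonneg fun w => sq_nonneg _
    have hint₂0 : 0 ≤ ∫ w, (h₂ w) ^ 2 := integral_nonneg fun w => sq_nonneg _
    have h1 : Nm ^ 2 ≤ ∫ w, ((h₁ w + h₂ w) / 2) ^ 2 := by
      have := pow_le_pow_left₀ hNm0 hNm_le 2
      rwa [Real.sq_sqrt hintm0] at this
    have h2 : (∫ w, (h₁ w) ^ 2) ≤ (Nu + ε) ^ 2 := by
      rw [← Real.sq_sqrt hint₁0]
      exact pow_le_pow_left₀ (Real.sqrt_nonneg _) hr₁lt.le 2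
    have h3 : (∫ w, (h₂ w) ^ 2) ≤ (Nv + ε) ^ 2 := by
      rw [← Real.sq_sqrt hint₂0]
      exact pow_le_pow_left₀ (Real.sqrt_nonneg _) hr₂lt.le 2
    linarith
  apply le_of_forall_pos_le_add
  intro ε hε
  have hC : (0 : ℝ) < Nu + Nv + 1 := by linarith
  set η := min 1 (ε / (Nu + Nv + 1)) with hηdef
  have hη : 0 < η := lt_min one_pos (div_pos hε hC)
  have hη1 : η ≤ 1 := min_le_left _ _
  have hηC : η * (Nu + Nv + 1) ≤ ε := by
    rw [← le_div_iff₀ hC]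
    exact min_le_right _ _
  have := key η hη
  nlinarith [mul_le_mul_of_nonneg_left hη1 hη.le]


open scoped Classical in
theorem helper_main
    (q : ℕ) (𝒜 : Type*) [MeasurableSpace 𝒜] (a : 𝒜)
    (n : ℕ) (hn : 0 < n)
    (X : Fin n → (Fin q → ℝ)) (A : Fin n → 𝒜) (Ytil Yhat : Fin n → ℝ)
    (γ : Fin q → ℝ) (hγ : ∀ j, 0 < γ j) (lam : ℝ) (hlam : 0 < lam)
    (f₀ : (Fin q → ℝ) → ℝ)
    (fhat dn : (Fin q → ℝ) → ℝ)
    (E : ℝ)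
    (hfhat_mem : memGaussRKHS q γ Set.univ fhat)
    (hfhat_min : ∀ f, memGaussRKHS q γ Set.univ f →
      (∑ i, if A i = a then (Yhat i - fhat (X i)) ^ 2 else 0) / n
          + lam * (gaussRKHSNorm q γ Set.univ fhat) ^ 2
        ≤ (∑ i, if A i = a then (Yhat i - f (X i)) ^ 2 else 0) / n
          + lam * (gaussRKHSNorm q γ Set.univ f) ^ 2)
    (hdn_mem : memGaussRKHS q γ Set.univ dn)
    (hdn_min : ∀ f, memGaussRKHS q γ Set.univ f →
      (∑ i, if A i = a then (Ytil i - dn (X i)) ^ 2 else 0) / n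
          + lam * (gaussRKHSNorm q γ Set.univ dn) ^ 2
        ≤ (∑ i, if A i = a then (Ytil i - f (X i)) ^ 2 else 0) / n
          + lam * (gaussRKHSNorm q γ Set.univ f) ^ 2) :
    ∀ f, memGaussRKHS q γ Set.univ f →
      lam * (gaussRKHSNorm q γ Set.univ fhat) ^ 2 + E
        ≤ lam * (gaussRKHSNorm q γ Set.univ f) ^ 2
          + (∑ i, if A i = a then
              (Ytil i - f (X i)) ^ 2 - (Ytil i - f₀ (X i)) ^ 2 else 0) / n
          - (∑ i, if A i = a then
              (Ytil i - fhat (X i)) ^ 2 - (Ytil i - f₀ (X i)) ^ 2 else 0) / n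
          + E
          + 2 * (∑ i, (Yhat i - Ytil i) ^ 2) / n := by
  intro f hf
  obtain ⟨g₁, hg₁, hrep₁⟩ := hfhat_mem
  obtain ⟨g₂, hg₂, hrep₂⟩ := hdn_mem
  obtain ⟨hmem_m, hrep_m⟩ := mid_rep q γ hγ hg₁ hg₂ hrep₁ hrep₂
  have hmmem : memGaussRKHS q γ Set.univ (fun y => (fhat y + dn y) / 2) :=
    ⟨_, hmem_m, hrep_m⟩
  have hnorm := mid_norm_sq q γ hγ ⟨g₁, hg₁, hrep₁⟩ ⟨g₂, hg₂, hrep₂⟩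
  have hmin := hfhat_min _ hmmem
  have hdmin := hdn_min f hf
  have F1 : (∑ i, if A i = a then (Yhat i - (fhat (X i) + dn (X i)) / 2) ^ 2 else 0)
      = ((∑ i, if A i = a then (Yhat i - fhat (X i)) ^ 2 else 0)
          + ∑ i, if A i = a then (Yhat i - dn (X i)) ^ 2 else 0) / 2
        - (∑ i, if A i = a then (fhat (X i) - dn (X i)) ^ 2 else 0) / 4 := by
    rw [← Finset.sum_add_distrib, Finset.sum_div, Finset.sum_div, ← Finset.sum_sub_distrib]
    exact Finset.sum_congr rfl fun i _ => by by_cases h : A i = a <;> simp [h] <;> ring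
  rw [F1] at hmin
  have F4 : (∑ i, if A i = a then (Ytil i - fhat (X i)) ^ 2 else 0)
        - (∑ i, if A i = a then (Yhat i - fhat (X i)) ^ 2 else 0)
        - (∑ i, if A i = a then (Ytil i - dn (X i)) ^ 2 else 0)
        + (∑ i, if A i = a then (Yhat i - dn (X i)) ^ 2 else 0)
      ≤ (∑ i, if A i = a then (fhat (X i) - dn (X i)) ^ 2 else 0) / 2
        + 2 * ∑ i, (Yhat i - Ytil i) ^ 2 := by
    rw [← Finset.sum_sub_distrib, ← Finset.sum_sub_distrib, ← Finset.sum_add_distrib,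
      Finset.sum_div, Finset.mul_sum, ← Finset.sum_add_distrib]
    apply Finset.sum_le_sum
    intro i _
    by_cases h : A i = a
    · simp only [h, if_pos]
      nlinarith [sq_nonneg ((dn (X i) - fhat (X i)) - 2 * (Ytil i - Yhat i))]
    · simp only [h, if_neg, if_false]
      nlinarith [sq_nonneg (Yhat i - Ytil i)]
  have F6 : ∀ g : (Fin q → ℝ) → ℝ,
      (∑ i, if A i = a then (Ytil i - g (X i)) ^ 2 - (Ytil i - f₀ (X i)) ^ 2 else 0)
        = (∑ i, if A i = a then (Ytil i - g (X i)) ^ 2 else 0)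
          - (∑ i, if A i = a then (Ytil i - f₀ (X i)) ^ 2 else 0) := by
    intro g
    rw [← Finset.sum_sub_distrib]
    exact Finset.sum_congr rfl fun i _ => by by_cases h : A i = a <;> simp [h]
  have npos : (0 : ℝ) < n := by exact_mod_cast hn
  have hmul : lam * (gaussRKHSNorm q γ Set.univ (fun y => (fhat y + dn y) / 2)) ^ 2
      ≤ lam * (((gaussRKHSNorm q γ Set.univ fhat) ^ 2
          + (gaussRKHSNorm q γ Set.univ dn) ^ 2) / 2) :=
    mul_le_mul_of_nonneg_left hnorm hlam.le
  rw [F6 f, F6 fhat]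
  have F4d := (div_le_div_iff_of_pos_right npos).mpr F4
  set S0 := ∑ i, if A i = a then (Ytil i - f₀ (X i)) ^ 2 else 0 with hS0
  set Shf := ∑ i, if A i = a then (Yhat i - fhat (X i)) ^ 2 else 0 with hShf
  set Shd := ∑ i, if A i = a then (Yhat i - dn (X i)) ^ 2 else 0 with hShd
  set Stf := ∑ i, if A i = a then (Ytil i - f (X i)) ^ 2 else 0 with hStf
  set Sth := ∑ i, if A i = a then (Ytil i - fhat (X i)) ^ 2 else 0 with hSth
  set Std := ∑ i, if A i = a then (Ytil i - dn (X i)) ^ 2 else 0 with hStd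
  set D := ∑ i, if A i = a then (fhat (X i) - dn (X i)) ^ 2 else 0 with hD
  set T := ∑ i, (Yhat i - Ytil i) ^ 2 with hT
  have e1 : ((Shf + Shd) / 2 - D / 4) / n = Shf / n / 2 + Shd / n / 2 - D / n / 4 := by ring
  have e2 : (Sth - Shf - Std + Shd) / n = Sth / n - Shf / n - Std / n + Shd / n := by ring
  have e3 : (D / 2 + 2 * T) / n = D / n / 2 + 2 * T / n := by ring
  have e4 : (Stf - S0) / n = Stf / n - S0 / n := by ring
  have e5 : (Sth - S0) / n = Sth / n - S0 / n := by ring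
  linarith [hmin, hdmin, F4d, hmul, e1, e2, e3, e4, e5]

open scoped Classical in
/-- Basic decomposition for kernel ridge regression with surrogate responses.  With
`f̂ₙ` the KRR minimizer based on surrogate responses `Ŷ`, `dₙ` the KRR minimizer based on the
true responses `Ỹ`, `h_f = I(A=a)[{Ỹ − f(X)}² − {Ỹ − f₀(X)}²]` and
`ℰ(f) = λ‖f‖²_{H_γ} + E h_{T_B(f)}`, one has, for every `f ∈ H_γ`,
`ℰ(f̂ₙ) ≤ λ‖f‖²_{H_γ} + Pₙ h_f − Pₙ h_{f̂ₙ} + E h_{T_B(f̂ₙ)} + 2 Pₙ (Ŷ − Ỹ)²`. -/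
theorem stmt_11
    (q : ℕ) (𝒜 : Type*) [MeasurableSpace 𝒜] (a : 𝒜)
    (n : ℕ) (hn : 0 < n)
    (X : Fin n → (Fin q → ℝ)) (A : Fin n → 𝒜) (Ytil Yhat : Fin n → ℝ)
    (ν : Measure ((Fin q → ℝ) × 𝒜 × ℝ)) [IsProbabilityMeasure ν]
    (B : ℝ) (hB : 1 ≤ B)
    (hYae : ∀ᵐ p ∂ν, |p.2.2| ≤ B)
    (hYdata : ∀ i, |Ytil i| ≤ B)
    (f₀ : (Fin q → ℝ) → ℝ) (hf₀meas : Measurable f₀) (hf₀bdd : ∀ x, |f₀ x| ≤ B)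
    (γ : Fin q → ℝ) (hγ : ∀ j, 0 < γ j) (lam : ℝ) (hlam : 0 < lam)
    (fhat dn : (Fin q → ℝ) → ℝ)
    (hfhat_mem : memGaussRKHS q γ Set.univ fhat)
    (hfhat_min : ∀ f, memGaussRKHS q γ Set.univ f →
      (∑ i, if A i = a then (Yhat i - fhat (X i)) ^ 2 else 0) / n
          + lam * (gaussRKHSNorm q γ Set.univ fhat) ^ 2
        ≤ (∑ i, if A i = a then (Yhat i - f (X i)) ^ 2 else 0) / n
          + lam * (gaussRKHSNorm q γ Set.univ f) ^ 2)
    (hdn_mem : memGaussRKHS q γ Set.univ dn)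
    (hdn_min : ∀ f, memGaussRKHS q γ Set.univ f →
      (∑ i, if A i = a then (Ytil i - dn (X i)) ^ 2 else 0) / n
          + lam * (gaussRKHSNorm q γ Set.univ dn) ^ 2
        ≤ (∑ i, if A i = a then (Ytil i - f (X i)) ^ 2 else 0) / n
          + lam * (gaussRKHSNorm q γ Set.univ f) ^ 2) :
    ∀ f, memGaussRKHS q γ Set.univ f →
      lam * (gaussRKHSNorm q γ Set.univ fhat) ^ 2
          + (∫ p, (if p.2.1 = a then
              (p.2.2 - trunc B (fhat p.1)) ^ 2 - (p.2.2 - f₀ p.1) ^ 2 else 0) ∂ν)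
        ≤ lam * (gaussRKHSNorm q γ Set.univ f) ^ 2
          + (∑ i, if A i = a then
              (Ytil i - f (X i)) ^ 2 - (Ytil i - f₀ (X i)) ^ 2 else 0) / n
          - (∑ i, if A i = a then
              (Ytil i - fhat (X i)) ^ 2 - (Ytil i - f₀ (X i)) ^ 2 else 0) / n
          + (∫ p, (if p.2.1 = a then
              (p.2.2 - trunc B (fhat p.1)) ^ 2 - (p.2.2 - f₀ p.1) ^ 2 else 0) ∂ν)
          + 2 * (∑ i, (Yhat i - Ytil i) ^ 2) / n := by
  exact helper_main q 𝒜 a n hn X A Ytil Yhat γ hγ lam hlam f₀ fhat dn _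
    hfhat_mem hfhat_min hdn_mem hdn_min
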